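/- Let P be a nonconstant polynomial with complex coefficients, viewed as the map z ↦ P(z) on ℂ, let U be a nonempty connected open subset of ℂ, and let W be a connected component of P⁻¹(U). Then P maps W surjectively onto U, i.e. P(W) = U. -/

import Mathlib

open Polynomial

/-- A nonconstant polynomial over `ℂ` is an open map. -/
lemma poly_isOpenMap (P : Polynomial ℂ) (hP : 0 < P.natDegree) :
    IsOpenMap (fun w : ℂ => P.eval w) := by
  have hA : AnalyticOnNhd ℂ (fun w : ℂ => P.eval w) Set.univ := fun z _ => by
    have := (analyticAt_id (𝕜 := ℂ) (z := z)).aeval_polynomial P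
    simpa using this
  rcases hA.is_constant_or_isOpen isPreconnected_univ with h | h
  · exfalso
    obtain ⟨c, hc⟩ := h
    have : P = Polynomial.C c := by
      apply Polynomial.eq_of_infinite_eval_eq
      apply Set.Infinite.mono (s := Set.univ)
      · intro z _
        simp [hc z (Set.mem_univ z)]
      · exact Set.infinite_univ
    rw [this] at hP
    simp at hP
  · intro s hs
    exact h s (Set.subset_univ s) hs

/-- A nonconstant polynomial over `ℂ` is a proper map. -/
lemma poly_isProperMap (P : Polynomial ℂ) (hP : 0 < P.natDegree) :
    IsProperMap (fun w : ℂ => P.eval w) := by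
  rw [isProperMap_iff_tendsto_cocompact]
  refine ⟨P.continuous_aeval.congr (by simp), ?_⟩
  apply tendsto_cocompact_of_tendsto_dist_comp_atTop (0 : ℂ)
  simp only [dist_zero_right]
  exact P.tendsto_norm_atTop (natDegree_pos_iff_degree_pos.mp hP)
    tendsto_norm_cocompact_atTop

/-- For a nonconstant polynomial `P` over `ℂ`, a nonempty connected open set `U ⊆ ℂ`,
and a connected component `W` of `P⁻¹(U)`, the map `P` sends `W` onto `U`:
`P(W) = U`. -/
theorem image_component_of_preimage_open_connected (P : Polynomial ℂ)
    (hP : 0 < P.natDegree) (U : Set ℂ) (hUo : IsOpen U) (hUne : U.Nonempty)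
    (hUconn : IsConnected U) (W : Set ℂ)
    (hW : ∃ z ∈ (fun w : ℂ => P.eval w) ⁻¹' U,
      W = connectedComponentIn ((fun w : ℂ => P.eval w) ⁻¹' U) z) :
    (fun w : ℂ => P.eval w) '' W = U := by
  set f : ℂ → ℂ := fun w : ℂ => P.eval w with hf
  obtain ⟨z, hzU, hWdef⟩ := hW
  have hfc : Continuous f := P.continuous_aeval.congr (by simp [hf])
  have hSo : IsOpen (f ⁻¹' U) := hUo.preimage hfc
  have hWo : IsOpen W := hWdef ▸ hSo.connectedComponentIn
  have hWS : W ⊆ f ⁻¹' U := hWdef ▸ connectedComponentIn_subset _ _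
  have hzW : z ∈ W := hWdef ▸ mem_connectedComponentIn hzU
  -- W is "closed in f ⁻¹' U": closure W ∩ f ⁻¹' U ⊆ W
  have hWclrel : closure W ∩ f ⁻¹' U ⊆ W := by
    rintro w ⟨hwcl, hwS⟩
    have hopen : IsOpen (connectedComponentIn (f ⁻¹' U) w) := hSo.connectedComponentIn
    have hwmem : w ∈ connectedComponentIn (f ⁻¹' U) w := mem_connectedComponentIn hwS
    obtain ⟨y, hyC, hyW⟩ := mem_closure_iff.mp hwcl _ hopen hwmem
    have h1 : connectedComponentIn (f ⁻¹' U) w = connectedComponentIn (f ⁻¹' U) y :=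
      connectedComponentIn_eq hyC
    have h2 : connectedComponentIn (f ⁻¹' U) z = connectedComponentIn (f ⁻¹' U) y :=
      connectedComponentIn_eq (hWdef ▸ hyW)
    rw [hWdef, h2, ← h1]
    exact hwmem
  have hproper : IsProperMap f := poly_isProperMap P hP
  have hopenmap : IsOpenMap f := poly_isOpenMap P hP
  -- f '' W is open
  have himo : IsOpen (f '' W) := hopenmap W hWo
  -- f '' W ⊆ U
  have himsub : f '' W ⊆ U := by
    rintro _ ⟨w, hw, rfl⟩
    exact hWS hw
  -- U ∩ closure (f '' W) ⊆ f '' W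
  have hclosedrel : U ∩ closure (f '' W) ⊆ f '' W := by
    rintro u ⟨huU, hucl⟩
    have hWcl : closure (f '' W) ⊆ f '' closure W := by
      apply closure_minimal (Set.image_mono (f := f) subset_closure)
      exact hproper.isClosedMap _ isClosed_closure
    obtain ⟨w, hwcl, hwu⟩ := hWcl hucl
    have hwS : w ∈ f ⁻¹' U := by simp [Set.mem_preimage, hwu, huU]
    exact ⟨w, hWclrel ⟨hwcl, hwS⟩, hwu⟩
  -- nonempty
  have hne : (f '' W).Nonempty := ⟨f z, Set.mem_image_of_mem f hzW⟩
  -- U is preconnected, f '' W and U \ closure (f '' W) are disjoint open sets covering U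
  by_contra hne'
  have hssub : U \ closure (f '' W) ≠ ∅ := by
    intro h
    apply hne'
    apply Set.Subset.antisymm himsub
    intro u huU
    have : u ∈ closure (f '' W) := by
      by_contra hu
      exact absurd (Set.eq_empty_iff_forall_notMem.mp h u) (by simp [huU, hu])
    exact hclosedrel ⟨huU, this⟩
  obtain ⟨u, huU, hucl⟩ := Set.nonempty_iff_ne_empty.mpr hssub
  -- apply preconnectedness
  have := hUconn.isPreconnected
  rw [isPreconnected_iff_subset_of_disjoint] at this
  have hcover : U ⊆ f '' W ∪ (closure (f '' W))ᶜ := by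
    intro x hxU
    by_cases hx : x ∈ closure (f '' W)
    · exact Or.inl (hclosedrel ⟨hxU, hx⟩)
    · exact Or.inr hx
  have hdisj : U ∩ (f '' W ∩ (closure (f '' W))ᶜ) = ∅ := by
    ext x
    simp only [Set.mem_inter_iff, Set.mem_empty_iff_false, iff_false, not_and]
    intro _ hx hc
    exact hc (subset_closure hx)
  rcases this (f '' W) (closure (f '' W))ᶜ himo isClosed_closure.isOpen_compl hcover hdisj
    with h | h
  · exact hne' (Set.Subset.antisymm himsub h)
  · obtain ⟨w0, hw0⟩ := hne
    exact (h (himsub hw0)) (subset_closure hw0)
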